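/- (Trnková) For every functor F : Type u ⥤ Type u there exists a functor F̄ : Type u ⥤ Type u that preserves finite intersections (F̄.map of every injection is injective and F̄ preserves pullbacks of pairs of injective maps) and agrees with F away from the empty set: F̄.obj X = F.obj X for every nonempty X and F̄.map g = F.map g for every function g between nonempty sets (equivalently, there is a natural transformation r : F ⟶ F̄ whose component at every nonempty set is the identity/an isomorphism). Concretely, F̄ may be defined on ∅ as the equalizer of F.map t and F.map f : F.obj PUnit → F.obj Bool, where t, f : PUnit → Bool pick the two elements. -/

import Mathlib

open CategoryTheory

universe u

/-- A set functor preserves finite intersections (formulated via pullbacks of pairs of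
injective maps): `F.map` of every injection is injective, and `F` preserves the pullback of
any two injective maps into a common codomain, expressed by the `∃!` condition below. -/
def PreservesFiniteIntersectionsOfInjections (F : Type u ⥤ Type u) : Prop :=
  (∀ {X Y : Type u} (m : X → Y), Function.Injective m → Function.Injective (F.map (TypeCat.ofHom m))) ∧
  ∀ {X Y Z : Type u} (f : X → Z) (g : Y → Z),
    Function.Injective f → Function.Injective g →
      ∀ (a : F.obj X) (b : F.obj Y), F.map (TypeCat.ofHom f) a = F.map (TypeCat.ofHom g) b →
        ∃! p : F.obj {q : X × Y // f q.1 = g q.2},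
          F.map (TypeCat.ofHom (fun q : {q : X × Y // f q.1 = g q.2} => q.1.1)) p = a ∧
          F.map (TypeCat.ofHom (fun q : {q : X × Y // f q.1 = g q.2} => q.1.2)) p = b

lemma mapmap (F : Type u ⥤ Type u) {A B C : Type u} (τ : A → B) (σ : B → C) (x : F.obj A) :
    F.map (↾σ) (F.map (↾τ) x) = F.map (↾(fun a => σ (τ a))) x := by
  rw [← FunctorToTypes.map_comp_apply]; rfl

lemma map_inj_of_nonempty (F : Type u ⥤ Type u) {X Y : Type u} [Nonempty X]
    {m : X → Y} (hm : Function.Injective m) : Function.Injective (F.map (↾m)) := by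
  have key : ∀ c, F.map (↾(Function.invFun m)) (F.map (↾m) c) = c := by
    intro c
    rw [mapmap]
    have h : (fun x => Function.invFun m (m x)) = fun x : X => x :=
      funext (Function.leftInverse_invFun hm)
    rw [h]
    exact FunctorToTypes.map_id_apply F c
  intro a b hab
  rw [← key a, ← key b, hab]

lemma lemmaA (F : Type u ⥤ Type u) {X Y Z : Type u} (f : X → Z) (g : Y → Z)
    (hf : Function.Injective f) (hg : Function.Injective g)
    (q₀ : {q : X × Y // f q.1 = g q.2}) (a : F.obj X) (b : F.obj Y)
    (hab : F.map (↾f) a = F.map (↾g) b) :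
    ∃! p : F.obj {q : X × Y // f q.1 = g q.2},
      F.map (↾(fun q : {q : X × Y // f q.1 = g q.2} => q.1.1)) p = a ∧
      F.map (↾(fun q : {q : X × Y // f q.1 = g q.2} => q.1.2)) p = b := by
  classical
  set P := {q : X × Y // f q.1 = g q.2} with hP
  have : Nonempty X := ⟨q₀.1.1⟩
  have : Nonempty Y := ⟨q₀.1.2⟩
  have : Nonempty P := ⟨q₀⟩
  have hπ₁inj : Function.Injective (fun q : P => q.1.1) := by
    intro q q' h
    have h1 : f q.1.1 = f q'.1.1 := congrArg f h
    have h2 : g q.1.2 = g q'.1.2 := by rw [← q.2, ← q'.2]; exact h1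
    exact Subtype.ext (Prod.ext h (hg h2))
  set t1 : Z → Z := fun z => if ∃ x, f x = z then z else f q₀.1.1 with ht1
  set t2 : Z → Z := fun z => if ∃ y, g y = z then z else g q₀.1.2 with ht2
  set r : Z → P := fun z => if h : ∃ q : P, f q.1.1 = z then h.choose else q₀ with hr
  have hfc : F.map (↾t1) (F.map (↾f) a) = F.map (↾f) a := by
    rw [mapmap]
    have e : (fun x => t1 (f x)) = f := by
      funext x
      show t1 (f x) = f x
      rw [ht1]; exact if_pos ⟨x, rfl⟩
    rw [e]
  have hgc : F.map (↾t2) (F.map (↾f) a) = F.map (↾f) a := by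
    rw [hab, mapmap]
    have e : (fun y => t2 (g y)) = g := by
      funext y
      show t2 (g y) = g y
      rw [ht2]; exact if_pos ⟨y, rfl⟩
    rw [e]
  have hkey : (fun z => f ((r z).1.1)) = fun z => t2 (t1 z) := by
    funext z
    show f (r z).1.1 = t2 (t1 z)
    by_cases h : ∃ q : P, f q.1.1 = z
    · have h1 : r z = h.choose := dif_pos h
      have h2 : f (h.choose).1.1 = z := h.choose_spec
      have hx : ∃ x, f x = z := ⟨_, h2⟩
      have hy : ∃ y, g y = z := ⟨h.choose.1.2, by rw [← h.choose.2]; exact h2⟩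
      rw [h1, h2]
      simp only [ht1, ht2, if_pos hx, if_pos hy]
    · have h1 : r z = q₀ := dif_neg h
      rw [h1]
      by_cases hx : ∃ x, f x = z
      · have hy : ¬∃ y, g y = z := by
          rintro ⟨y, hy⟩
          obtain ⟨x, hxz⟩ := hx
          exact h ⟨⟨(x, y), by rw [hxz, hy]⟩, hxz⟩
        simp only [ht1, ht2, if_pos hx, if_neg hy]
        exact q₀.2
      · have hy2 : ∃ y, g y = f q₀.1.1 := ⟨q₀.1.2, q₀.2.symm⟩
        simp only [ht1, ht2, if_neg hx, if_pos hy2]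
  have hfp : F.map (↾f) (F.map (↾(fun q : P => q.1.1)) (F.map (↾r) (F.map (↾f) a))) = F.map (↾f) a := by
    rw [mapmap, mapmap, hkey, ← mapmap, hfc, hgc]
  have hfin1 : F.map (↾(fun q : P => q.1.1)) (F.map (↾r) (F.map (↾f) a)) = a :=
    map_inj_of_nonempty F hf hfp
  have hfin2 : F.map (↾(fun q : P => q.1.2)) (F.map (↾r) (F.map (↾f) a)) = b := by
    apply map_inj_of_nonempty F hg
    rw [mapmap]
    have hgf : (fun q : P => g q.1.2) = fun q : P => f q.1.1 := by
      funext q; exact q.2.symm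
    rw [hgf, ← mapmap, hfin1, ← hab]
  refine ⟨F.map (↾r) (F.map (↾f) a), ⟨hfin1, hfin2⟩, ?_⟩
  intro p' hp'
  apply map_inj_of_nonempty F hπ₁inj
  rw [hp'.1, hfin1]

/-- The defining conditions for membership in the Trnková hull. -/
def TCond (F : Type u ⥤ Type u) (X : Type u) (a : F.obj (Option X)) : Prop :=
  F.map (↾(Option.some : Option X → Option (Option X))) a = F.map (↾(Option.map Option.some)) a ∧
  ∀ x : X, F.map (↾(fun o : Option X => Option.some (o.getD x))) a = a

lemma TCond_map (F : Type u ⥤ Type u) {X Y : Type u} (g : X → Y) (a : F.obj (Option X))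
    (h : TCond F X a) : TCond F Y (F.map (↾(Option.map g)) a) := by
  constructor
  · have key := congrArg (F.map (↾(Option.map (Option.map g)))) h.1
    rw [mapmap, mapmap] at key
    rw [mapmap, mapmap]
    have e1 : (fun o : Option X => (Option.some (Option.map g o) : Option (Option Y)))
        = fun o : Option X => Option.map (Option.map g) (Option.some o) := by
      funext o; rfl
    have e2 : (fun o : Option X => Option.map Option.some (Option.map g o))
        = fun o : Option X => Option.map (Option.map g) (Option.map Option.some o) := by
      funext o; cases o <;> rfl
    rw [e1, e2]
    exact key
  · intro y
    rw [mapmap]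
    by_cases hX : Nonempty X
    · obtain ⟨x₀⟩ := hX
      have h1 := h.2 x₀
      calc F.map (↾(fun o : Option X => Option.some ((Option.map g o).getD y))) a
          = F.map (↾(fun o : Option X => Option.some ((Option.map g o).getD y)))
              (F.map (↾(fun o : Option X => Option.some (o.getD x₀))) a) := by rw [h1]
        _ = F.map (↾(fun o : Option X =>
              Option.some ((Option.map g (Option.some (o.getD x₀))).getD y))) a := by
            rw [mapmap]
        _ = F.map (↾(fun o : Option X => Option.map g (Option.some (o.getD x₀)))) a := by
            congr 1
        _ = F.map (↾(Option.map g)) (F.map (↾(fun o : Option X => Option.some (o.getD x₀))) a) := by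
            rw [mapmap]
        _ = F.map (↾(Option.map g)) a := by rw [h1]
    · have hXe : IsEmpty X := not_nonempty_iff.mp hX
      have hnone : ∀ o : Option X, o = none := by
        intro o
        cases o with
        | none => rfl
        | some x => exact (hXe.false x).elim
      have key := congrArg (F.map (↾(Option.map (fun _ : Option X => y)))) h.1
      rw [mapmap, mapmap] at key
      have e1 : (fun o : Option X => Option.map (fun _ : Option X => y) (Option.some o))
          = fun o : Option X => (Option.some ((Option.map g o).getD y) : Option Y) := by
        funext o; rw [hnone o]; rfl
      have e2 : (fun o : Option X => Option.map (fun _ : Option X => y) (Option.map Option.some o))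
          = Option.map g := by
        funext o; rw [hnone o]; rfl
      rw [e1, e2] at key
      exact key

/-- The Trnková hull of `F`. -/
def TBar (F : Type u ⥤ Type u) : Type u ⥤ Type u where
  obj X := {a : F.obj (Option X) // TCond F X a}
  map {X Y} g := ↾(fun a => ⟨F.map (↾(Option.map g)) a.1, TCond_map F g a.1 a.2⟩)
  map_id X := by
    refine ConcreteCategory.hom_ext _ _ fun a => ?_
    apply Subtype.ext
    show F.map (↾(Option.map (𝟙 X))) a.1 = a.1
    have e : (↾(Option.map (𝟙 X)) : Option X ⟶ Option X) = 𝟙 (Option X) := by ext o; cases o <;> rfl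
    rw [e, FunctorToTypes.map_id_apply]
  map_comp {X Y Z} g g' := by
    refine ConcreteCategory.hom_ext _ _ fun a => ?_
    apply Subtype.ext
    show F.map (↾(Option.map (g ≫ g'))) a.1 = F.map (↾(Option.map g')) (F.map (↾(Option.map g)) a.1)
    rw [mapmap]
    have e : Option.map (g ≫ g') = fun o => Option.map g' (Option.map g o) := by
      funext o; cases o <;> rfl
    rw [e]

/-- The canonical natural transformation into the Trnková hull. -/
def rBar (F : Type u ⥤ Type u) : F ⟶ TBar F where
  app X := ↾(fun a => ⟨F.map (↾(Option.some : X → Option X)) a, by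
    constructor
    · rw [mapmap, mapmap]
    · intro x
      rw [mapmap]⟩)
  naturality X Y g := by
    refine ConcreteCategory.hom_ext _ _ fun a => ?_
    apply Subtype.ext
    show F.map (↾Option.some) (F.map (↾g) a) = F.map (↾(Option.map g)) (F.map (↾Option.some) a)
    rw [mapmap, mapmap]

theorem exists_trnkova_hull' (F : Type u ⥤ Type u) :
    ∃ (Fbar : Type u ⥤ Type u) (r : F ⟶ Fbar),
      ((∀ {X Y : Type u} (m : X → Y), Function.Injective m → Function.Injective (Fbar.map (↾m))) ∧
      ∀ {X Y Z : Type u} (f : X → Z) (g : Y → Z),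
        Function.Injective f → Function.Injective g →
          ∀ (a : Fbar.obj X) (b : Fbar.obj Y), Fbar.map (↾f) a = Fbar.map (↾g) b →
            ∃! p : Fbar.obj {q : X × Y // f q.1 = g q.2},
              Fbar.map (↾(fun q : {q : X × Y // f q.1 = g q.2} => q.1.1)) p = a ∧
              Fbar.map (↾(fun q : {q : X × Y // f q.1 = g q.2} => q.1.2)) p = b) ∧
        ∀ X : Type u, Nonempty X → IsIso (r.app X) := by
  classical
  refine ⟨TBar F, rBar F, ⟨?_, ?_⟩, ?_⟩
  · -- injectivity
    intro X Y m hm aa bb h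
    apply Subtype.ext
    haveI : Nonempty (Option X) := ⟨none⟩
    exact map_inj_of_nonempty F (Option.map_injective hm) (congrArg Subtype.val h)
  · -- pullbacks
    intro X Y Z f g hf hg a b hab
    have hπ₁inj : Function.Injective (fun q : {q : X × Y // f q.1 = g q.2} => q.1.1) := by
      intro q q' h
      have h1 : f q.1.1 = f q'.1.1 := congrArg f h
      have h2 : g q.1.2 = g q'.1.2 := by rw [← q.2, ← q'.2]; exact h1
      exact Subtype.ext (Prod.ext h (hg h2))
    have hab' : F.map (↾(Option.map f)) a.1 = F.map (↾(Option.map g)) b.1 := congrArg Subtype.val hab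
    obtain ⟨p', ⟨hp1, hp2⟩, hpu⟩ := lemmaA F (Option.map f) (Option.map g)
      (Option.map_injective hf) (Option.map_injective hg) ⟨(none, none), rfl⟩ a.1 b.1 hab'
    -- the equivalence between Option of the pullback and the pullback of the Option.maps
    let einv : Option {q : X × Y // f q.1 = g q.2} →
        {q : Option X × Option Y // Option.map f q.1 = Option.map g q.2} := fun o =>
      match o with
      | none => ⟨(none, none), rfl⟩
      | some q => ⟨(some q.1.1, some q.1.2), by
          show some (f q.1.1) = some (g q.1.2); rw [q.2]⟩
    have hbij : Function.Bijective einv := by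
      constructor
      · intro o o' h
        match o, o' with
        | none, none => rfl
        | some q, some q' =>
          have h1 : (some q.1.1 : Option X) = some q'.1.1 :=
            congrArg (fun u => u.1.1) h
          have h2 : (some q.1.2 : Option Y) = some q'.1.2 :=
            congrArg (fun u => u.1.2) h
          exact congrArg some (Subtype.ext (Prod.ext (Option.some.inj h1) (Option.some.inj h2)))
        | none, some q =>
          exact absurd (congrArg (fun u => u.1.1) h) (by simp [einv])
        | some q, none =>
          exact absurd (congrArg (fun u => u.1.1) h) (by simp [einv])
      · rintro ⟨⟨o1, o2⟩, hq⟩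
        match o1, o2, hq with
        | none, none, hq => exact ⟨none, rfl⟩
        | none, some y, hq => exact absurd hq (by simp)
        | some x, none, hq => exact absurd hq (by simp)
        | some x, some y, hq =>
          refine ⟨some ⟨(x, y), Option.some.inj hq⟩, rfl⟩
    let ε := Equiv.ofBijective einv hbij
    have hcomm1 : ∀ o, Option.map (fun q : {q : X × Y // f q.1 = g q.2} => q.1.1) o
        = (einv o).1.1 := by
      intro o; cases o <;> rfl
    have hcomm2 : ∀ o, Option.map (fun q : {q : X × Y // f q.1 = g q.2} => q.1.2) o
        = (einv o).1.2 := by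
      intro o; cases o <;> rfl
    have hproj1 : F.map (↾(Option.map (fun q : {q : X × Y // f q.1 = g q.2} => q.1.1)))
        (F.map (↾(⇑ε.symm)) p') = a.1 := by
      rw [mapmap]
      have e : (fun q' : {q : Option X × Option Y // Option.map f q.1 = Option.map g q.2} =>
          Option.map (fun q : {q : X × Y // f q.1 = g q.2} => q.1.1) (ε.symm q'))
          = fun q' => q'.1.1 := by
        funext q'
        rw [hcomm1]
        exact congrArg (fun u => u.1.1) (ε.apply_symm_apply q')
      exact (congrArg (fun u => F.map (↾u) p') e).trans hp1
    have hproj2 : F.map (↾(Option.map (fun q : {q : X × Y // f q.1 = g q.2} => q.1.2)))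
        (F.map (↾(⇑ε.symm)) p') = b.1 := by
      rw [mapmap]
      have e : (fun q' : {q : Option X × Option Y // Option.map f q.1 = Option.map g q.2} =>
          Option.map (fun q : {q : X × Y // f q.1 = g q.2} => q.1.2) (ε.symm q'))
          = fun q' => q'.1.2 := by
        funext q'
        rw [hcomm2]
        exact congrArg (fun u => u.1.2) (ε.apply_symm_apply q')
      exact (congrArg (fun u => F.map (↾u) p') e).trans hp2
    haveI : Nonempty (Option {q : X × Y // f q.1 = g q.2}) := ⟨none⟩
    haveI : Nonempty (Option (Option {q : X × Y // f q.1 = g q.2})) := ⟨none⟩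
    have J : Function.Injective
        (F.map (↾(Option.map (fun q : {q : X × Y // f q.1 = g q.2} => q.1.1)))) :=
      map_inj_of_nonempty F (Option.map_injective hπ₁inj)
    have hC2 : F.map (↾(Option.some)) (F.map (↾(⇑ε.symm)) p')
        = F.map (↾(Option.map Option.some)) (F.map (↾(⇑ε.symm)) p') := by
      apply map_inj_of_nonempty F (Option.map_injective (Option.map_injective hπ₁inj))
      calc F.map (↾(Option.map (Option.map (fun q : {q : X × Y // f q.1 = g q.2} => q.1.1))))
            (F.map (↾Option.some) (F.map (↾(⇑ε.symm)) p'))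
          = F.map (↾(fun o : Option {q : X × Y // f q.1 = g q.2} =>
              Option.map (Option.map (fun q : {q : X × Y // f q.1 = g q.2} => q.1.1))
                (Option.some o))) (F.map (↾(⇑ε.symm)) p') :=
            mapmap F Option.some
              (Option.map (Option.map (fun q : {q : X × Y // f q.1 = g q.2} => q.1.1))) _
        _ = F.map (↾(fun o : Option {q : X × Y // f q.1 = g q.2} =>
              Option.some (Option.map (fun q : {q : X × Y // f q.1 = g q.2} => q.1.1) o)))
              (F.map (↾(⇑ε.symm)) p') :=
            congrArg (fun u => F.map (↾u) (F.map (↾(⇑ε.symm)) p')) (funext fun o => rfl)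
        _ = F.map (↾Option.some)
              (F.map (↾(Option.map (fun q : {q : X × Y // f q.1 = g q.2} => q.1.1)))
                (F.map (↾(⇑ε.symm)) p')) :=
            (mapmap F (Option.map (fun q : {q : X × Y // f q.1 = g q.2} => q.1.1))
              Option.some _).symm
        _ = F.map (↾Option.some) a.1 := by rw [hproj1]
        _ = F.map (↾(Option.map Option.some)) a.1 := a.2.1
        _ = F.map (↾(Option.map Option.some))
              (F.map (↾(Option.map (fun q : {q : X × Y // f q.1 = g q.2} => q.1.1)))
                (F.map (↾(⇑ε.symm)) p')) := by rw [hproj1]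
        _ = F.map (↾(fun o : Option {q : X × Y // f q.1 = g q.2} => Option.map Option.some
              (Option.map (fun q : {q : X × Y // f q.1 = g q.2} => q.1.1) o)))
              (F.map (↾(⇑ε.symm)) p') :=
            mapmap F (Option.map (fun q : {q : X × Y // f q.1 = g q.2} => q.1.1))
              (Option.map Option.some) _
        _ = F.map (↾(fun o : Option {q : X × Y // f q.1 = g q.2} => Option.map
              (Option.map (fun q : {q : X × Y // f q.1 = g q.2} => q.1.1))
              (Option.map Option.some o))) (F.map (↾(⇑ε.symm)) p') :=
            congrArg (fun u => F.map (↾u) (F.map (↾(⇑ε.symm)) p'))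
              (funext fun o => by cases o <;> rfl)
        _ = F.map (↾(Option.map (Option.map (fun q : {q : X × Y // f q.1 = g q.2} => q.1.1))))
            (F.map (↾(Option.map Option.some)) (F.map (↾(⇑ε.symm)) p')) :=
            (mapmap F (Option.map Option.some)
              (Option.map (Option.map (fun q : {q : X × Y // f q.1 = g q.2} => q.1.1))) _).symm
    have hC1 : ∀ q : {q : X × Y // f q.1 = g q.2},
        F.map (↾(fun o : Option {q : X × Y // f q.1 = g q.2} => Option.some (o.getD q)))
          (F.map (↾(⇑ε.symm)) p') = F.map (↾(⇑ε.symm)) p' := by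
      intro q
      apply J
      calc F.map (↾(Option.map (fun q : {q : X × Y // f q.1 = g q.2} => q.1.1)))
            (F.map (↾(fun o : Option {q : X × Y // f q.1 = g q.2} => Option.some (o.getD q)))
              (F.map (↾(⇑ε.symm)) p'))
          = F.map (↾(fun o : Option {q : X × Y // f q.1 = g q.2} =>
              Option.map (fun q : {q : X × Y // f q.1 = g q.2} => q.1.1)
                (Option.some (o.getD q)))) (F.map (↾(⇑ε.symm)) p') :=
            mapmap F (fun o : Option {q : X × Y // f q.1 = g q.2} => Option.some (o.getD q))
              (Option.map (fun q : {q : X × Y // f q.1 = g q.2} => q.1.1)) _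
        _ = F.map (↾(fun o : Option {q : X × Y // f q.1 = g q.2} =>
              Option.some ((Option.map (fun q : {q : X × Y // f q.1 = g q.2} => q.1.1) o).getD
                q.1.1))) (F.map (↾(⇑ε.symm)) p') :=
            congrArg (fun u => F.map (↾u) (F.map (↾(⇑ε.symm)) p'))
              (funext fun o => by cases o <;> rfl)
        _ = F.map (↾(fun o : Option X => Option.some (o.getD q.1.1)))
              (F.map (↾(Option.map (fun q : {q : X × Y // f q.1 = g q.2} => q.1.1)))
                (F.map (↾(⇑ε.symm)) p')) :=
            (mapmap F (Option.map (fun q : {q : X × Y // f q.1 = g q.2} => q.1.1))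
              (fun o : Option X => Option.some (o.getD q.1.1)) _).symm
        _ = F.map (↾(fun o : Option X => Option.some (o.getD q.1.1))) a.1 := by rw [hproj1]
        _ = a.1 := a.2.2 q.1.1
        _ = F.map (↾(Option.map (fun q : {q : X × Y // f q.1 = g q.2} => q.1.1)))
            (F.map (↾(⇑ε.symm)) p') := hproj1.symm
    refine ⟨⟨F.map (↾(⇑ε.symm)) p', hC2, hC1⟩, ⟨Subtype.ext hproj1, Subtype.ext hproj2⟩, ?_⟩
    intro p₂ hp₂
    apply Subtype.ext
    apply J
    exact (congrArg Subtype.val hp₂.1).trans hproj1.symm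
  · -- iso on nonempty sets
    rintro X ⟨x₀⟩
    refine ⟨⟨↾(fun aa => F.map (↾(fun o : Option X => o.getD x₀)) aa.1), ?_, ?_⟩⟩
    · refine ConcreteCategory.hom_ext _ _ fun a => ?_
      show F.map (↾(fun o : Option X => o.getD x₀)) (F.map (↾Option.some) a) = a
      rw [mapmap]
      have e : (↾(fun x : X => (Option.some x).getD x₀) : X ⟶ X) = 𝟙 X := rfl
      rw [e, FunctorToTypes.map_id_apply]
    · refine ConcreteCategory.hom_ext _ _ fun aa => ?_
      apply Subtype.ext
      show F.map (↾Option.some) (F.map (↾(fun o : Option X => o.getD x₀)) aa.1) = aa.1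
      rw [mapmap]
      exact aa.2.2 x₀


/-- **Trnková's hull:** for every set functor `F` there is a set functor `F̄` preserving
finite intersections together with a natural transformation `r : F ⟶ F̄` whose component at
every nonempty set is an isomorphism (so `F̄` agrees with `F` away from the empty set). -/
theorem exists_trnkova_hull (F : Type u ⥤ Type u) :
    ∃ (Fbar : Type u ⥤ Type u) (r : F ⟶ Fbar),
      PreservesFiniteIntersectionsOfInjections Fbar ∧
        ∀ X : Type u, Nonempty X → IsIso (r.app X) := by
  obtain ⟨Fbar, r, h, hiso⟩ := exists_trnkova_hull' F
  exact ⟨Fbar, r, ⟨h.1, h.2⟩, hiso⟩
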